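/- Let (a_n/b_n, c_n/d_n) be the Farey pair at depth n in the Farey pair tree, and for i = 0,…,n let (a_i/b_i, c_i/d_i) denote the Farey pairs along the path from the root to this node. Then all the numbers a_i, b_i, c_i, d_i are bounded by (n+1)(a_n + b_n). -/
import Mathlib


def fareyStep (P : (ℕ × ℕ) × (ℕ × ℕ)) (bit : Bool) : (ℕ × ℕ) × (ℕ × ℕ) :=
  if bit then ((P.1.1 + P.2.1, P.1.2 + P.2.2), P.2)
  else (P.1, (P.1.1 + P.2.1, P.1.2 + P.2.2))

/-- The Farey pair tree: `F(ε) = (0/1, 1/1)`, and if `F(σ) = (a/b, c/d)` then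
`F(σ0) = (a/b, (a+c)/(b+d))` and `F(σ1) = ((a+c)/(b+d), c/d)`. -/
def fareyTree (σ : List Bool) : (ℕ × ℕ) × (ℕ × ℕ) :=
  σ.foldl fareyStep ((0, 1), (1, 1))

lemma farey_foldl_mono (l : List Bool) (P : (ℕ × ℕ) × (ℕ × ℕ)) :
    P.1.1 ≤ (l.foldl fareyStep P).1.1 ∧ P.1.2 ≤ (l.foldl fareyStep P).1.2 ∧
    P.2.1 ≤ (l.foldl fareyStep P).2.1 ∧ P.2.2 ≤ (l.foldl fareyStep P).2.2 := by
  induction l generalizing P with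
  | nil => simp
  | cons b l ih =>
    have h := ih (fareyStep P b)
    simp only [List.foldl_cons]
    refine ⟨le_trans ?_ h.1, le_trans ?_ h.2.1, le_trans ?_ h.2.2.1, le_trans ?_ h.2.2.2⟩ <;>
      cases b <;> simp [fareyStep]

lemma farey_cd_bound (σ : List Bool) :
    (fareyTree σ).2.1 ≤ 1 + σ.length * (fareyTree σ).1.1 ∧
    (fareyTree σ).2.2 ≤ 1 + σ.length * (fareyTree σ).1.2 := by
  induction σ using List.reverseRecOn with
  | nil => simp [fareyTree]
  | append_singleton σ b ih =>
    have h : fareyTree (σ ++ [b]) = fareyStep (fareyTree σ) b := by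
      simp [fareyTree, List.foldl_append]
    rw [h]
    cases b <;> simp [fareyStep, List.length_append] <;>
      constructor <;> nlinarith [ih.1, ih.2]

/-- All numerators and denominators of the Farey pairs along the
path from the root to a node at depth `n` with left fraction `a_n/b_n` are bounded
by `(n+1) * (a_n + b_n)`. -/
theorem farey_path_bound (σ : List Bool) (i : ℕ) (hi : i ≤ σ.length) :
    (fareyTree (σ.take i)).1.1 ≤ (σ.length + 1) * ((fareyTree σ).1.1 + (fareyTree σ).1.2) ∧
    (fareyTree (σ.take i)).1.2 ≤ (σ.length + 1) * ((fareyTree σ).1.1 + (fareyTree σ).1.2) ∧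
    (fareyTree (σ.take i)).2.1 ≤ (σ.length + 1) * ((fareyTree σ).1.1 + (fareyTree σ).1.2) ∧
    (fareyTree (σ.take i)).2.2 ≤ (σ.length + 1) * ((fareyTree σ).1.1 + (fareyTree σ).1.2) := by
  have e : (σ.drop i).foldl fareyStep (fareyTree (σ.take i)) = fareyTree σ := by
    rw [fareyTree, fareyTree, ← List.foldl_append, List.take_append_drop]
  have hmono := farey_foldl_mono (σ.drop i) (fareyTree (σ.take i))
  rw [e] at hmono
  have hb : 1 ≤ (fareyTree σ).1.2 := (farey_foldl_mono σ ((0, 1), (1, 1))).2.1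
  have hcd := farey_cd_bound σ
  set n := σ.length
  set A := (fareyTree σ).1.1
  set B := (fareyTree σ).1.2
  refine ⟨hmono.1.trans ?_, hmono.2.1.trans ?_, hmono.2.2.1.trans ?_, hmono.2.2.2.trans ?_⟩
  · nlinarith
  · nlinarith
  · exact hcd.1.trans (by nlinarith)
  · exact hcd.2.trans (by nlinarith)
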